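/- arXiv:1912.10231 — 2 statements merged into one kernel-verified Lean document; each statement's English description precedes it below -/
import Mathlib

section
/- Bauer–Fike type bound: if A is diagonalizable as A = V D V⁻¹ with D diagonal, then for any matrix Δ of the same size, every eigenvalue μ of A + Δ satisfies |μ - λ| ≤ ‖V‖‖V⁻¹‖‖Δ‖ for some eigenvalue λ of A, where ‖·‖ is the spectral (operator 2-) norm. -/
open scoped Matrix.Norms.L2Operator ENNReal NNReal
open MeasureTheory ProbabilityTheory Filter

/-- Spectral radius (as a real number) of a real square matrix, via its complex spectrum. -/
noncomputable def specRadR {n : ℕ} (M : Matrix (Fin n) (Fin n) ℝ) : ℝ :=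
  (spectralRadius ℂ (M.map Complex.ofReal)).toReal

/-- Spectral radius (as a real number) of a complex square matrix. -/
noncomputable def specRadC {n : ℕ} (M : Matrix (Fin n) (Fin n) ℂ) : ℝ :=
  (spectralRadius ℂ M).toReal

/-- Complementary CDF of the standard normal distribution. -/
noncomputable def Qccdf (x : ℝ) : ℝ := ((gaussianReal 0 1) (Set.Ici x)).toReal

/-- The L2 operator norm of a diagonal matrix is bounded by a uniform bound on the entries. -/
lemma diag_l2_norm_le {n : ℕ} (w : Fin n → ℂ) {c : ℝ} (hc : 0 ≤ c)
    (h : ∀ i, ‖w i‖ ≤ c) : ‖Matrix.diagonal w‖ ≤ c := by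
  rw [Matrix.l2_opNorm_def]
  refine ContinuousLinearMap.opNorm_le_bound _ hc fun x => ?_
  have hx : ∀ (y : EuclideanSpace ℂ (Fin n)), ‖y‖ = Real.sqrt (∑ i, ‖y i‖ ^ 2) :=
    fun y => by rw [EuclideanSpace.norm_eq]
  rw [hx, hx]
  have happ : ∀ i, ((Matrix.toEuclideanLin.trans LinearMap.toContinuousLinearMap)
      (Matrix.diagonal w) x) i = w i * x i := by
    intro i
    show ((Matrix.toEuclideanLin (Matrix.diagonal w)) x) i = w i * x i
    rw [Matrix.toEuclideanLin_apply]
    simp [Matrix.mulVec_diagonal]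
  simp only [happ]
  rw [← Real.sqrt_sq hc, ← Real.sqrt_mul (sq_nonneg c)]
  apply Real.sqrt_le_sqrt
  rw [Finset.mul_sum]
  apply Finset.sum_le_sum
  intro i _
  rw [norm_mul, mul_pow]
  have h1 : ‖w i‖ ^ 2 ≤ c ^ 2 := by
    apply sq_le_sq' _ (h i)
    linarith [norm_nonneg (w i)]
  exact mul_le_mul_of_nonneg_right h1 (sq_nonneg _)

/-- Bauer–Fike: if `A = V D V⁻¹` with `D` diagonal and `V` invertible, then every
eigenvalue `μ` of `A + Δ` is within `‖V‖‖V⁻¹‖‖Δ‖` (spectral norm) of some eigenvalue of `A`. -/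
theorem stmt1 {n : ℕ} (A Δ V D : Matrix (Fin n) (Fin n) ℂ)
    (hV : IsUnit V.det) (hD : D.IsDiag) (hA : A = V * D * V⁻¹)
    (μ : ℂ) (hμ : μ ∈ spectrum ℂ (A + Δ)) :
    ∃ lam ∈ spectrum ℂ A, ‖μ - lam‖ ≤ ‖V‖ * ‖V⁻¹‖ * ‖Δ‖ := by
  by_cases hμA : μ ∈ spectrum ℂ A
  · refine ⟨μ, hμA, ?_⟩
    simp only [sub_self, map_zero, norm_zero]
    positivity
  -- μ is not an eigenvalue of A
  set d : Fin n → ℂ := D.diag with hd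
  have hDd : Matrix.diagonal d = D := hD.diagonal_diag
  have hVunit : IsUnit V := (Matrix.isUnit_iff_isUnit_det V).mpr hV
  have hVinv : (↑hVunit.unit⁻¹ : Matrix (Fin n) (Fin n) ℂ) = V⁻¹ := by
    rw [Matrix.nonsing_inv_eq_ringInverse, ← Ring.inverse_unit hVunit.unit, hVunit.unit_spec]
  have hspec : spectrum ℂ A = Set.range d := by
    have hA' : A = (hVunit.unit : Matrix (Fin n) (Fin n) ℂ) * D
        * (↑(hVunit.unit⁻¹) : Matrix (Fin n) (Fin n) ℂ) := by
      rw [hVinv, hVunit.unit_spec]; exact hA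
    rw [hA', spectrum.units_conjugate, ← hDd, spectrum_diagonal]
  have hne : ∀ j, μ - d j ≠ 0 := by
    intro j hj
    exact hμA (hspec ▸ ⟨j, (sub_eq_zero.mp hj).symm⟩)
  -- n must be positive since the spectrum of A + Δ is nonempty
  rcases Nat.eq_zero_or_pos n with hn | hn
  · exfalso
    rw [spectrum.mem_iff] at hμ
    subst hn
    exact hμ (isUnit_of_subsingleton _)
  have : Nonempty (Fin n) := ⟨⟨0, hn⟩⟩
  -- take the closest eigenvalue
  obtain ⟨i₀, -, hi₀⟩ := Finset.exists_min_image Finset.univ (fun j => ‖μ - d j‖)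
    ⟨Classical.arbitrary (Fin n), Finset.mem_univ _⟩
  set δ : ℝ := ‖μ - d i₀‖ with hδ
  have hδpos : 0 < δ := norm_pos_iff.mpr (hne i₀)
  refine ⟨d i₀, hspec ▸ ⟨i₀, rfl⟩, ?_⟩
  set E : Matrix (Fin n) (Fin n) ℂ := Matrix.diagonal (fun j => (μ - d j)⁻¹) with hE
  set N : Matrix (Fin n) (Fin n) ℂ := V * E * V⁻¹ with hN
  have hVV : V * V⁻¹ = 1 := Matrix.mul_nonsing_inv V hV
  have hVV' : V⁻¹ * V = 1 := Matrix.nonsing_inv_mul V hV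
  have hfact : μ • (1 : Matrix (Fin n) (Fin n) ℂ) - A
      = V * Matrix.diagonal (fun j => μ - d j) * V⁻¹ := by
    have h1 : μ • (1 : Matrix (Fin n) (Fin n) ℂ) = V * (μ • 1) * V⁻¹ := by
      rw [Matrix.mul_smul, Matrix.mul_one, Matrix.smul_mul, hVV]
    rw [hA, h1, ← Matrix.sub_mul, ← Matrix.mul_sub]
    congr 1
    congr 1
    rw [Matrix.smul_one_eq_diagonal, ← hDd, Matrix.diagonal_sub]
  have hdiagmul : Matrix.diagonal (fun j => μ - d j) * E = 1 := by
    rw [hE, Matrix.diagonal_mul_diagonal]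
    have h : ∀ j, (μ - d j) * (μ - d j)⁻¹ = 1 := fun j => mul_inv_cancel₀ (hne j)
    simp only [h, Matrix.diagonal_one]
  have hdiagmul' : E * Matrix.diagonal (fun j => μ - d j) = 1 := by
    rw [hE, Matrix.diagonal_mul_diagonal]
    have h : ∀ j, (μ - d j)⁻¹ * (μ - d j) = 1 := fun j => inv_mul_cancel₀ (hne j)
    simp only [h, Matrix.diagonal_one]
  have hNinv : (μ • (1 : Matrix (Fin n) (Fin n) ℂ) - A) * N = 1 := by
    rw [hfact, hN]
    calc V * Matrix.diagonal (fun j => μ - d j) * V⁻¹ * (V * E * V⁻¹)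
        = V * Matrix.diagonal (fun j => μ - d j) * (V⁻¹ * V) * E * V⁻¹ := by
          simp only [mul_assoc]
      _ = 1 := by rw [hVV', Matrix.mul_one, Matrix.mul_assoc V, hdiagmul, Matrix.mul_one, hVV]
  have hNinv' : N * (μ • (1 : Matrix (Fin n) (Fin n) ℂ) - A) = 1 := by
    rw [hfact, hN]
    calc V * E * V⁻¹ * (V * Matrix.diagonal (fun j => μ - d j) * V⁻¹)
        = V * E * (V⁻¹ * V) * Matrix.diagonal (fun j => μ - d j) * V⁻¹ := by
          simp only [mul_assoc]
      _ = 1 := by rw [hVV', Matrix.mul_one, Matrix.mul_assoc V, hdiagmul', Matrix.mul_one, hVV]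
  have hUnit : IsUnit (μ • (1 : Matrix (Fin n) (Fin n) ℂ) - A) :=
    ⟨⟨_, N, hNinv, hNinv'⟩, rfl⟩
  have hfac2 : (μ • (1 : Matrix (Fin n) (Fin n) ℂ) - A) * (1 - N * Δ)
      = μ • 1 - (A + Δ) := by
    rw [mul_sub, mul_one, ← mul_assoc, hNinv, one_mul, sub_sub]
  have hμ' : ¬ IsUnit (μ • (1 : Matrix (Fin n) (Fin n) ℂ) - (A + Δ)) := by
    rw [spectrum.mem_iff, Algebra.algebraMap_eq_smul_one] at hμ
    exact hμ
  have hnotUnit : ¬ IsUnit (1 - N * Δ) := by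
    intro h
    exact hμ' (hfac2 ▸ hUnit.mul h)
  have h1 : (1 : ℝ) ≤ ‖N * Δ‖ := by
    by_contra h
    push_neg at h
    exact hnotUnit (Units.oneSub (N * Δ) h).isUnit
  have hEnorm : ‖E‖ ≤ δ⁻¹ := by
    apply diag_l2_norm_le _ (by positivity)
    intro j
    rw [norm_inv]
    exact inv_anti₀ hδpos (hi₀ j (Finset.mem_univ j))
  have hNΔ : ‖N * Δ‖ ≤ ‖V‖ * ‖E‖ * ‖V⁻¹‖ * ‖Δ‖ := by
    calc ‖N * Δ‖ ≤ ‖N‖ * ‖Δ‖ := norm_mul_le _ _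
      _ ≤ ‖V * E‖ * ‖V⁻¹‖ * ‖Δ‖ :=
          mul_le_mul_of_nonneg_right (hN ▸ norm_mul_le _ _) (norm_nonneg _)
      _ ≤ ‖V‖ * ‖E‖ * ‖V⁻¹‖ * ‖Δ‖ :=
          mul_le_mul_of_nonneg_right
            (mul_le_mul_of_nonneg_right (norm_mul_le _ _) (norm_nonneg _)) (norm_nonneg _)
  have key : (1 : ℝ) ≤ ‖V‖ * δ⁻¹ * ‖V⁻¹‖ * ‖Δ‖ := by
    refine h1.trans (hNΔ.trans ?_)
    refine mul_le_mul_of_nonneg_right (mul_le_mul_of_nonneg_right ?_ (norm_nonneg _))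
      (norm_nonneg _)
    exact mul_le_mul_of_nonneg_left hEnorm (norm_nonneg V)
  calc ‖μ - d i₀‖ = δ * 1 := (mul_one δ).symm
    _ ≤ δ * (‖V‖ * δ⁻¹ * ‖V⁻¹‖ * ‖Δ‖) := by
        exact mul_le_mul_of_nonneg_left key hδpos.le
    _ = (δ * δ⁻¹) * (‖V‖ * ‖V⁻¹‖ * ‖Δ‖) := by ring
    _ = ‖V‖ * ‖V⁻¹‖ * ‖Δ‖ := by rw [mul_inv_cancel₀ hδpos.ne', one_mul]
end

section
/- Let z_i ~ N(0, σ_i²), i ∈ S, be independent Gaussians and let B J_i be fixed n×n real matrices. Define the perturbed matrix Ã = A_cl + Σ_{i∈S} z_i B J_i and v̲ = Σ_{i∈S} σ_i² (tr(B J_i))². If v̲ > 0 and μ = tr(A_cl), then P(ρ(Ã) ≥ 1) ≥ Q((n+μ)/√v̲) + Q((n−μ)/√v̲). -/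
open scoped Matrix.Norms.L2Operator ENNReal NNReal
open MeasureTheory ProbabilityTheory Filter

section SpecRad

open Polynomial

lemma aux_root_mem_spectrum {n : ℕ} (M : Matrix (Fin n) (Fin n) ℂ) (μ : ℂ)
    (h : M.charpoly.IsRoot μ) : μ ∈ spectrum ℂ M := by
  rw [spectrum.mem_iff, Matrix.isUnit_iff_isUnit_det, isUnit_iff_ne_zero]
  simp only [ne_eq, not_not]
  have h1 : (algebraMap ℂ (Matrix (Fin n) (Fin n) ℂ)) μ - M
      = (evalRingHom μ).mapMatrix (M.charmatrix) := by
    ext i j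
    by_cases hij : i = j <;>
      simp [hij, Matrix.charmatrix_apply, Matrix.algebraMap_matrix_apply, Matrix.diagonal_apply]
  rw [h1, ← RingHom.map_det]
  simpa [Matrix.charpoly] using h

lemma aux_norm_root_le {n : ℕ} (M : Matrix (Fin n) (Fin n) ℂ) (μ : ℂ)
    (h : μ ∈ M.charpoly.roots) : ‖μ‖ ≤ specRadC M := by
  rcases Nat.eq_zero_or_pos n with hn | hn
  · subst hn
    have : M.charpoly = 1 := by
      have := M.charpoly_natDegree_eq_dim
      simp only [Fintype.card_fin] at this
      exact Polynomial.eq_one_of_monic_natDegree_zero M.charpoly_monic this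
    simp [this] at h
  haveI : Nonempty (Fin n) := ⟨⟨0, hn⟩⟩
  have hmem : μ ∈ spectrum ℂ M := aux_root_mem_spectrum M μ (Polynomial.isRoot_of_mem_roots h)
  have h1 : (‖μ‖₊ : ℝ≥0∞) ≤ spectralRadius ℂ M :=
    le_iSup₂ (f := fun (k : ℂ) (_ : k ∈ spectrum ℂ M) => (‖k‖₊ : ℝ≥0∞)) μ hmem
  have h2 : spectralRadius ℂ M ≤ (‖M‖₊ : ℝ≥0∞) := spectrum.spectralRadius_le_nnnorm M
  have h3 : spectralRadius ℂ M ≠ ⊤ := ne_top_of_le_ne_top ENNReal.coe_ne_top h2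
  have := ENNReal.toReal_mono h3 h1
  simpa [specRadC] using this

lemma aux_abs_trace_le {n : ℕ} (M : Matrix (Fin n) (Fin n) ℝ) :
    |M.trace| ≤ n * specRadR M := by
  set Mc := M.map Complex.ofReal with hMc
  have htr : Mc.trace = (M.trace : ℂ) := by
    simp [hMc, Matrix.trace, Matrix.diag]
  have hsum : Mc.trace = Mc.charpoly.roots.sum := Matrix.trace_eq_sum_roots_charpoly Mc
  have hcard : Multiset.card Mc.charpoly.roots = n := by
    have hs : Mc.charpoly.Splits := IsAlgClosed.splits _
    rw [(Polynomial.splits_iff_card_roots).mp hs, Mc.charpoly_natDegree_eq_dim, Fintype.card_fin]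
  have key : ‖Mc.trace‖ ≤ n * (spectralRadius ℂ Mc).toReal := by
    rw [hsum]
    calc ‖Mc.charpoly.roots.sum‖ ≤ (Mc.charpoly.roots.map (fun μ => ‖μ‖)).sum :=
          norm_multiset_sum_le _
      _ ≤ (Mc.charpoly.roots.map (fun _ => (spectralRadius ℂ Mc).toReal)).sum := by
          apply Multiset.sum_map_le_sum_map
          intro μ hμ
          exact aux_norm_root_le Mc μ hμ
      _ = n * (spectralRadius ℂ Mc).toReal := by
          rw [Multiset.map_const', Multiset.sum_replicate, hcard, nsmul_eq_mul]
  rw [htr] at key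
  simpa [specRadR] using key

end SpecRad

section Gaussian

open Real

lemma aux_integral_rexp_quadratic {b : ℝ} (hb : b < 0) (c d : ℝ) :
    ∫ x : ℝ, rexp (b * x ^ 2 + c * x + d)
      = Real.sqrt (π / -b) * rexp (d - c ^ 2 / (4 * b)) := by
  have hb' : (b : ℂ).re < 0 := by simpa using hb
  have h := integral_cexp_quadratic hb' (c : ℂ) (d : ℂ)
  have hl : ∫ x : ℝ, Complex.exp ((b:ℂ) * x ^ 2 + c * x + d)
      = ((∫ x : ℝ, rexp (b * x ^ 2 + c * x + d) : ℝ) : ℂ) := by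
    have e : ∀ x : ℝ, Complex.exp ((b:ℂ) * x ^ 2 + c * x + d)
        = ((rexp (b * x ^ 2 + c * x + d) : ℝ) : ℂ) := fun x => by
      rw [show ((b:ℂ) * x ^ 2 + c * x + d) = ((b * x ^ 2 + c * x + d : ℝ) : ℂ) by push_cast; ring,
        ← Complex.ofReal_exp]
    simp only [e]
    exact integral_ofReal
  have h3 : (0:ℝ) < -b := neg_pos.mpr hb
  have h2 : (0:ℝ) ≤ π / -b := by positivity
  have hr : ((π : ℂ) / -(b:ℂ)) ^ (1 / 2 : ℂ) * Complex.exp ((d:ℂ) - (c:ℂ)^2 / (4 * (b:ℂ)))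
      = ((Real.sqrt (π / -b) * rexp (d - c ^ 2 / (4 * b)) : ℝ) : ℂ) := by
    have h1 : ((π:ℂ) / -(b:ℂ)) = ((π / -b : ℝ) : ℂ) := by push_cast; ring
    have h4 : (1/2 : ℂ) = ((1/2 : ℝ) : ℂ) := by norm_num
    have h5 : ((d:ℂ) - (c:ℂ)^2 / (4 * (b:ℂ))) = ((d - c^2/(4*b) : ℝ) : ℂ) := by
      push_cast; ring
    rw [h1, h4, ← Complex.ofReal_cpow h2, ← Real.sqrt_eq_rpow, h5, ← Complex.ofReal_exp]
    push_cast
    ring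
  rw [hl, hr] at h
  exact_mod_cast h

lemma aux_gaussianPDFReal_conv {v₁ v₂ : ℝ≥0} (h₁ : v₁ ≠ 0) (h₂ : v₂ ≠ 0) (μ₁ μ₂ t : ℝ) :
    ∫ x : ℝ, gaussianPDFReal μ₁ v₁ x * gaussianPDFReal μ₂ v₂ (t - x)
      = gaussianPDFReal (μ₁ + μ₂) (v₁ + v₂) t := by
  have hV₁ : (0:ℝ) < v₁ := by positivity
  have hV₂ : (0:ℝ) < v₂ := by positivity
  set V₁ : ℝ := (v₁ : ℝ) with hV1def
  set V₂ : ℝ := (v₂ : ℝ) with hV2def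
  set b : ℝ := -(V₁ + V₂) / (2 * V₁ * V₂) with hbdef
  have hb : b < 0 := by
    apply div_neg_of_neg_of_pos
    · linarith
    · positivity
  set c : ℝ := μ₁ / V₁ + (t - μ₂) / V₂ with hcdef
  set d : ℝ := -(μ₁^2 / (2*V₁) + (t - μ₂)^2 / (2*V₂)) with hddef
  set K : ℝ := (Real.sqrt (2 * π * V₁))⁻¹ * (Real.sqrt (2 * π * V₂))⁻¹ with hKdef
  have hintg : ∀ x : ℝ, gaussianPDFReal μ₁ v₁ x * gaussianPDFReal μ₂ v₂ (t - x)
      = K * rexp (b * x ^ 2 + c * x + d) := by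
    intro x
    rw [gaussianPDFReal, gaussianPDFReal]
    rw [show (Real.sqrt (2 * π * V₁))⁻¹ * rexp (-(x - μ₁) ^ 2 / (2 * V₁)) *
          ((Real.sqrt (2 * π * V₂))⁻¹ * rexp (-(t - x - μ₂) ^ 2 / (2 * V₂)))
        = K * (rexp (-(x - μ₁) ^ 2 / (2 * V₁)) * rexp (-(t - x - μ₂) ^ 2 / (2 * V₂))) by
      rw [hKdef]; ring]
    rw [← Real.exp_add]
    congr 1
    have hS : V₁ + V₂ ≠ 0 := by positivity
    have h1 : V₁ ≠ 0 := ne_of_gt hV₁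
    have h2 : V₂ ≠ 0 := ne_of_gt hV₂
    rw [hbdef, hcdef, hddef]
    field_simp
    ring
  rw [integral_congr_ae (ae_of_all _ hintg), integral_const_mul, aux_integral_rexp_quadratic hb c d]
  rw [gaussianPDFReal]
  have hexp : d - c ^ 2 / (4 * b) = -(t - (μ₁ + μ₂)) ^ 2 / (2 * ((v₁ : ℝ) + (v₂ : ℝ))) := by
    have hS : V₁ + V₂ ≠ 0 := by positivity
    have h1 : V₁ ≠ 0 := ne_of_gt hV₁
    have h2 : V₂ ≠ 0 := ne_of_gt hV₂
    have h4b : 4 * b = -(2 * (V₁ + V₂)) / (V₁ * V₂) := by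
      rw [hbdef]; field_simp; ring
    rw [h4b, div_div_eq_mul_div, hcdef, hddef]
    field_simp
    ring
  have hK : K * Real.sqrt (π / -b) = (Real.sqrt (2 * π * ((v₁:ℝ) + (v₂:ℝ))))⁻¹ := by
    rw [hKdef, hbdef]
    rw [show π / -(-(V₁ + V₂) / (2 * V₁ * V₂)) = (2 * π * V₁) * (2 * π * V₂) / (2 * π * (V₁ + V₂)) by
      field_simp]
    rw [Real.sqrt_div (by positivity), Real.sqrt_mul (x := 2 * π * V₁) (by positivity)]
    have e1 : Real.sqrt (2 * π * V₁) ≠ 0 := by positivity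
    have e2 : Real.sqrt (2 * π * V₂) ≠ 0 := by positivity
    have e3 : Real.sqrt (2 * π * (V₁ + V₂)) ≠ 0 := by positivity
    field_simp
    rfl
  calc K * (Real.sqrt (π / -b) * rexp (d - c ^ 2 / (4 * b)))
      = (K * Real.sqrt (π / -b)) * rexp (d - c ^ 2 / (4 * b)) := by ring
    _ = _ := by rw [hK, hexp]; push_cast; ring_nf

lemma aux_integrable_conv_integrand {v₁ v₂ : ℝ≥0} (μ₁ μ₂ t : ℝ) :
    Integrable (fun x : ℝ => gaussianPDFReal μ₁ v₁ x * gaussianPDFReal μ₂ v₂ (t - x)) := by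
  have H := Integrable.bdd_mul (f := gaussianPDFReal μ₂ v₂ ∘ (fun x => t - x)) (c := (Real.sqrt (2 * π * v₂))⁻¹)
    (integrable_gaussianPDFReal μ₁ v₁)
    ((measurable_gaussianPDFReal μ₂ v₂).comp
      (measurable_const.sub measurable_id)).aestronglyMeasurable ?_
  · simpa [mul_comm] using H
  · refine ae_of_all _ fun x => ?_
    simp only [Function.comp_apply]
    rw [Real.norm_eq_abs, abs_of_nonneg (gaussianPDFReal_nonneg _ _ _), gaussianPDFReal]
    apply mul_le_of_le_one_right (by positivity)
    apply Real.exp_le_one_iff.mpr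
    apply div_nonpos_of_nonpos_of_nonneg
    · simp [sq_nonneg]
    · positivity

lemma aux_lintegral_gaussianPDF_conv {v₁ v₂ : ℝ≥0} (h₁ : v₁ ≠ 0) (h₂ : v₂ ≠ 0) (μ₁ μ₂ t : ℝ) :
    ∫⁻ x : ℝ, gaussianPDF μ₁ v₁ x * gaussianPDF μ₂ v₂ (t - x)
      = gaussianPDF (μ₁ + μ₂) (v₁ + v₂) t := by
  have h : ∀ x : ℝ, gaussianPDF μ₁ v₁ x * gaussianPDF μ₂ v₂ (t - x)
      = ENNReal.ofReal (gaussianPDFReal μ₁ v₁ x * gaussianPDFReal μ₂ v₂ (t - x)) := by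
    intro x
    rw [gaussianPDF, gaussianPDF, ← ENNReal.ofReal_mul (gaussianPDFReal_nonneg _ _ _)]
  simp_rw [h]
  rw [← ofReal_integral_eq_lintegral_ofReal (aux_integrable_conv_integrand μ₁ μ₂ t)
    (ae_of_all _ fun x => mul_nonneg (gaussianPDFReal_nonneg _ _ _) (gaussianPDFReal_nonneg _ _ _))]
  rw [aux_gaussianPDFReal_conv h₁ h₂, gaussianPDF]

lemma aux_gaussianReal_prod_add {μ₁ μ₂ : ℝ} (v₁ v₂ : ℝ≥0) :
    Measure.map (fun p : ℝ × ℝ => p.1 + p.2) ((gaussianReal μ₁ v₁).prod (gaussianReal μ₂ v₂))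
      = gaussianReal (μ₁ + μ₂) (v₁ + v₂) := by
  by_cases h₁ : v₁ = 0
  · subst h₁
    rw [gaussianReal_zero_var, Measure.dirac_prod,
      Measure.map_map measurable_add measurable_prodMk_left]
    have h : ((fun p : ℝ × ℝ => p.1 + p.2) ∘ Prod.mk μ₁) = (fun y => μ₁ + y) := rfl
    rw [h, gaussianReal_map_const_add, zero_add, add_comm μ₂ μ₁]
  by_cases h₂ : v₂ = 0
  · subst h₂
    rw [gaussianReal_zero_var, Measure.prod_dirac,
      Measure.map_map measurable_add measurable_prodMk_right]
    have h : ((fun p : ℝ × ℝ => p.1 + p.2) ∘ (fun x => (x, μ₂))) = (fun x => x + μ₂) := rfl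
    rw [h, gaussianReal_map_add_const, add_zero]
  have hsum : v₁ + v₂ ≠ 0 := fun h => h₁ (by simpa using (add_eq_zero.mp h).1)
  ext s hs
  rw [Measure.map_apply measurable_add hs, Measure.prod_apply (measurable_add hs)]
  have key : ∀ x : ℝ, gaussianReal μ₂ v₂ (Prod.mk x ⁻¹' ((fun p : ℝ × ℝ => p.1 + p.2) ⁻¹' s))
      = ∫⁻ t in s, gaussianPDF μ₂ v₂ (t - x) := by
    intro x
    have hpre : Prod.mk x ⁻¹' ((fun p : ℝ × ℝ => p.1 + p.2) ⁻¹' s) = (fun y => x + y) ⁻¹' s := rfl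
    rw [hpre, ← Measure.map_apply (measurable_const_add x) hs, gaussianReal_map_const_add,
      gaussianReal_apply _ (by simpa using h₂)]
    congr 1
    ext t
    rw [gaussianPDF, gaussianPDF, gaussianPDFReal_sub]
  simp_rw [key]
  rw [gaussianReal_of_var_ne_zero _ h₁,
    lintegral_withDensity_eq_lintegral_mul _ (measurable_gaussianPDF _ _)
      (Measurable.lintegral_prod_right (f := fun x t => gaussianPDF μ₂ v₂ (t - x))
        ((measurable_gaussianPDF μ₂ v₂).comp (measurable_snd.sub measurable_fst)))]
  have hmeas2 : ∀ x : ℝ, Measurable fun t => gaussianPDF μ₂ v₂ (t - x) := fun x =>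
    (measurable_gaussianPDF μ₂ v₂).comp (measurable_id.sub measurable_const)
  simp only [Pi.mul_apply]
  simp_rw [← lintegral_const_mul _ (hmeas2 _)]
  rw [lintegral_lintegral_swap]
  · simp_rw [aux_lintegral_gaussianPDF_conv h₁ h₂ μ₁ μ₂]
    rw [gaussianReal_apply _ hsum]
  · apply Measurable.aemeasurable
    exact (measurable_gaussianPDF μ₁ v₁).comp measurable_fst |>.mul
      ((measurable_gaussianPDF μ₂ v₂).comp (measurable_snd.sub measurable_fst))

lemma aux_indepFun_map_add_gaussian {Ω : Type*} [MeasurableSpace Ω] {P : Measure Ω}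
    [IsProbabilityMeasure P] {X Y : Ω → ℝ} {μ₁ μ₂ : ℝ} {v₁ v₂ : ℝ≥0}
    (hX : Measurable X) (hY : Measurable Y) (hind : IndepFun X Y P)
    (hx : Measure.map X P = gaussianReal μ₁ v₁) (hy : Measure.map Y P = gaussianReal μ₂ v₂) :
    Measure.map (X + Y) P = gaussianReal (μ₁ + μ₂) (v₁ + v₂) := by
  have hprod := (ProbabilityTheory.indepFun_iff_map_prod_eq_prod_map_map hX.aemeasurable
    hY.aemeasurable).mp hind
  have h : (X + Y) = (fun p : ℝ × ℝ => p.1 + p.2) ∘ (fun ω => (X ω, Y ω)) := rfl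
  rw [h, ← Measure.map_map measurable_add (hX.prodMk hY), hprod, hx, hy,
    aux_gaussianReal_prod_add]

lemma aux_sum_indep_gaussian {Ω : Type*} [MeasurableSpace Ω] {P : Measure Ω}
    [IsProbabilityMeasure P] {ι : Type*} (w : ι → Ω → ℝ) (m : ι → ℝ) (v : ι → ℝ≥0)
    (hw : ∀ i, Measurable (w i))
    (hindep : iIndepFun w P)
    (S : Finset ι) (hd : ∀ i ∈ S, Measure.map (w i) P = gaussianReal (m i) (v i)) :
    Measure.map (∑ i ∈ S, w i) P = gaussianReal (∑ i ∈ S, m i) (∑ i ∈ S, v i) := by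
  classical
  induction S using Finset.induction_on with
  | empty =>
    simp only [Finset.sum_empty]
    rw [show ((0 : Ω → ℝ)) = (fun _ => (0:ℝ)) from rfl, Measure.map_const, measure_univ, one_smul,
      ← gaussianReal_zero_var]
  | @insert j s hj ih =>
    rw [Finset.sum_insert hj, Finset.sum_insert hj, Finset.sum_insert hj]
    exact aux_indepFun_map_add_gaussian (hw j)
      (by
        rw [show (∑ i ∈ s, w i) = fun a => ∑ i ∈ s, w i a from funext fun a => Finset.sum_apply a s w]
        exact s.measurable_sum fun i _ => hw i)
      (hindep.indepFun_finsetSum_of_notMem hw hj).symm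
      (hd j (Finset.mem_insert_self j s))
      (ih fun i hi => hd i (Finset.mem_insert_of_mem hi))

lemma aux_nnreal_sq_sqrt (v : ℝ≥0) :
    (⟨(Real.sqrt v)^2, sq_nonneg _⟩ : ℝ≥0) * 1 = v := by
  ext
  simp [Real.sq_sqrt (NNReal.coe_nonneg v)]

lemma aux_map_affine_gaussian (μ : ℝ) (v : ℝ≥0) :
    Measure.map (fun x => Real.sqrt v * x + μ) (gaussianReal 0 1) = gaussianReal μ v := by
  have h1 : Measure.map (fun x : ℝ => Real.sqrt v * x) (gaussianReal 0 1)
      = gaussianReal 0 v := by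
    rw [gaussianReal_map_const_mul, mul_zero]
    exact congrArg _ (aux_nnreal_sq_sqrt v)
  have h : (fun x : ℝ => Real.sqrt v * x + μ)
      = (fun x => x + μ) ∘ (fun x : ℝ => Real.sqrt v * x) := rfl
  rw [h, ← Measure.map_map (measurable_add_const μ) (measurable_const_mul _), h1,
    gaussianReal_map_add_const, zero_add]

lemma aux_gaussianReal_neg :
    Measure.map (fun x : ℝ => -x) (gaussianReal 0 1) = gaussianReal 0 1 := by
  have h := gaussianReal_map_const_mul (μ := 0) (v := 1) (-1 : ℝ)
  simp only [neg_one_mul, mul_zero] at h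
  rw [h]
  congr 1
  ext
  norm_num

lemma aux_gaussianReal_Ici_std (μ : ℝ) (v : ℝ≥0) (hv : v ≠ 0) (a : ℝ) :
    gaussianReal μ v (Set.Ici a)
      = gaussianReal 0 1 (Set.Ici ((a - μ) / Real.sqrt v)) := by
  have hv' : (0:ℝ) < Real.sqrt v := Real.sqrt_pos.mpr (by positivity)
  rw [← aux_map_affine_gaussian μ v, Measure.map_apply (by fun_prop) measurableSet_Ici]
  have hset : (fun x => Real.sqrt v * x + μ) ⁻¹' Set.Ici a
      = Set.Ici ((a - μ) / Real.sqrt v) := by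
    ext x
    simp only [Set.mem_preimage, Set.mem_Ici]
    rw [div_le_iff₀ hv', sub_le_iff_le_add, mul_comm]
  rw [hset]

lemma aux_gaussianReal_Iic_std (μ : ℝ) (v : ℝ≥0) (hv : v ≠ 0) (a : ℝ) :
    gaussianReal μ v (Set.Iic a)
      = gaussianReal 0 1 (Set.Ici ((μ - a) / Real.sqrt v)) := by
  have hv' : (0:ℝ) < Real.sqrt v := Real.sqrt_pos.mpr (by positivity)
  rw [← aux_map_affine_gaussian μ v, Measure.map_apply (by fun_prop) measurableSet_Iic]
  have hset : (fun x => Real.sqrt v * x + μ) ⁻¹' Set.Iic a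
      = (fun x : ℝ => -x) ⁻¹' Set.Ici ((μ - a) / Real.sqrt v) := by
    ext x
    simp only [Set.mem_preimage, Set.mem_Ici, Set.mem_Iic]
    rw [div_le_iff₀ hv']
    constructor <;> intro h <;> nlinarith
  rw [hset, ← Measure.map_apply measurable_neg measurableSet_Ici, aux_gaussianReal_neg]

end Gaussian

/-- lower bound on the probability of instability: with
`Ã = A_cl + ∑_{i∈S} z_i B J_i`, `z_i ~ N(0, σ_i²)` independent, and
`v̲ = ∑_{i∈S} σ_i² (tr(B J_i))² > 0`, `μ = tr(A_cl)`, we have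
`P(ρ(Ã) ≥ 1) ≥ Q((n+μ)/√v̲) + Q((n−μ)/√v̲)`. -/
theorem stmt5 {Ω : Type*} [MeasurableSpace Ω] (P : Measure Ω) [IsProbabilityMeasure P]
    {n : ℕ} {ι : Type*} (S : Finset ι) (z : ι → Ω → ℝ) (σ : ι → ℝ≥0)
    (BJ : ι → Matrix (Fin n) (Fin n) ℝ) (Acl : Matrix (Fin n) (Fin n) ℝ)
    (hmeas : ∀ i, Measurable (z i))
    (hindep : iIndepFun z P)
    (hdist : ∀ i ∈ S, Measure.map (z i) P = gaussianReal 0 (σ i ^ 2))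
    (hv : 0 < ∑ i ∈ S, (σ i : ℝ) ^ 2 * (Matrix.trace (BJ i)) ^ 2) :
    Qccdf ((n + Matrix.trace Acl) /
        Real.sqrt (∑ i ∈ S, (σ i : ℝ) ^ 2 * (Matrix.trace (BJ i)) ^ 2)) +
      Qccdf ((n - Matrix.trace Acl) /
        Real.sqrt (∑ i ∈ S, (σ i : ℝ) ^ 2 * (Matrix.trace (BJ i)) ^ 2)) ≤
    (P {ω | 1 ≤ specRadR (Acl + ∑ i ∈ S, z i ω • BJ i)}).toReal := by
  classical
  set c : ι → ℝ := fun i => (BJ i).trace with hc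
  set w : ι → Ω → ℝ := fun i ω => c i * z i ω with hwdef
  have hwmeas : ∀ i, Measurable (w i) := fun i => (hmeas i).const_mul _
  have hwindep : iIndepFun w P :=
    hindep.comp (fun i x => c i * x) (fun i => measurable_const_mul _)
  set ν : ι → ℝ≥0 := fun i => (show ℝ≥0 from ⟨(c i)^2, sq_nonneg _⟩) * σ i ^ 2 with hν
  have hwdist : ∀ i ∈ S, Measure.map (w i) P = gaussianReal 0 (ν i) := by
    intro i hi
    have : w i = (fun x => c i * x) ∘ z i := rfl
    rw [this, ← Measure.map_map (measurable_const_mul _) (hmeas i), hdist i hi,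
      gaussianReal_map_const_mul, mul_zero]
    rfl
  set v : ℝ≥0 := ∑ i ∈ S, ν i with hvdef
  have hvco : (v : ℝ) = ∑ i ∈ S, (σ i : ℝ) ^ 2 * (c i) ^ 2 := by
    rw [hvdef, NNReal.coe_sum]
    refine Finset.sum_congr rfl fun i _ => ?_
    rw [hν]
    simp only [NNReal.coe_mul, NNReal.coe_mk, NNReal.coe_pow]
    change ((c i ^ 2 : ℝ) * ((σ i : ℝ) ^ 2)) = _
    ring
  have hvne : v ≠ 0 := by
    intro h
    rw [← hvco] at hv
    rw [h] at hv
    simp at hv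
  -- n is positive
  have hn : 0 < n := by
    rcases Nat.eq_zero_or_pos n with h0 | h
    · exfalso
      have : ∀ i, c i = 0 := by
        intro i
        rw [hc]
        subst h0
        simp [Matrix.trace]
      simp only [hc] at this
      rw [show (∑ i ∈ S, (σ i : ℝ) ^ 2 * (Matrix.trace (BJ i)) ^ 2) = 0 from
        Finset.sum_eq_zero fun i _ => by rw [this i]; ring] at hv
      exact lt_irrefl _ hv
    · exact h
  -- the trace random variable
  set T : Ω → ℝ := fun ω => Acl.trace + (∑ i ∈ S, w i) ω with hT
  have hTmeas : Measurable T := by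
    apply Measurable.const_add
    rw [show (∑ i ∈ S, w i) = fun a => ∑ i ∈ S, w i a from funext fun a => Finset.sum_apply a S w]
    exact S.measurable_sum fun i _ => hwmeas i
  have hTdist : Measure.map T P = gaussianReal Acl.trace v := by
    have h1 : Measure.map (∑ i ∈ S, w i) P = gaussianReal 0 v := by
      have := aux_sum_indep_gaussian w (fun _ => 0) ν hwmeas hwindep S hwdist
      simpa [hvdef] using this
    have h2 : T = (fun x => Acl.trace + x) ∘ (∑ i ∈ S, w i) := rfl
    rw [h2, ← Measure.map_map (measurable_const_add _) (by
        rw [show (∑ i ∈ S, w i) = fun a => ∑ i ∈ S, w i a from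
          funext fun a => Finset.sum_apply a S w]
        exact S.measurable_sum fun i _ => hwmeas i), h1,
      gaussianReal_map_const_add, zero_add]
  -- trace identity
  have htrace : ∀ ω, (Acl + ∑ i ∈ S, z i ω • BJ i).trace = T ω := by
    intro ω
    rw [Matrix.trace_add, Matrix.trace_sum]
    simp only [Matrix.trace_smul, smul_eq_mul, hT, Finset.sum_apply, hwdef, hc]
    congr 1
    exact Finset.sum_congr rfl fun i _ => mul_comm _ _
  -- event inclusions
  set E : Set Ω := {ω | 1 ≤ specRadR (Acl + ∑ i ∈ S, z i ω • BJ i)} with hE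
  have hsubA : T ⁻¹' (Set.Ici (n : ℝ)) ⊆ E := by
    intro ω hω
    simp only [Set.mem_preimage, Set.mem_Ici] at hω
    have h1 := aux_abs_trace_le (Acl + ∑ i ∈ S, z i ω • BJ i)
    rw [htrace ω] at h1
    have h2 : (n : ℝ) ≤ n * specRadR (Acl + ∑ i ∈ S, z i ω • BJ i) :=
      le_trans (le_trans hω (le_abs_self _)) h1
    have hn' : (0:ℝ) < n := by exact_mod_cast hn
    simp only [hE, Set.mem_setOf_eq]
    nlinarith
  have hsubB : T ⁻¹' (Set.Iic (-(n : ℝ))) ⊆ E := by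
    intro ω hω
    simp only [Set.mem_preimage, Set.mem_Iic] at hω
    have h1 := aux_abs_trace_le (Acl + ∑ i ∈ S, z i ω • BJ i)
    rw [htrace ω] at h1
    have habs : (n:ℝ) ≤ |T ω| := le_trans (by linarith) (neg_le_abs _)
    have h2 : (n : ℝ) ≤ n * specRadR (Acl + ∑ i ∈ S, z i ω • BJ i) := le_trans habs h1
    have hn' : (0:ℝ) < n := by exact_mod_cast hn
    simp only [hE, Set.mem_setOf_eq]
    nlinarith
  -- probabilities
  have hPA : P (T ⁻¹' (Set.Ici (n : ℝ)))
      = gaussianReal 0 1 (Set.Ici (((n : ℝ) - Acl.trace) / Real.sqrt v)) := by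
    rw [← Measure.map_apply hTmeas measurableSet_Ici, hTdist,
      aux_gaussianReal_Ici_std _ _ hvne]
  have hPB : P (T ⁻¹' (Set.Iic (-(n : ℝ))))
      = gaussianReal 0 1 (Set.Ici (((n : ℝ) + Acl.trace) / Real.sqrt v)) := by
    rw [← Measure.map_apply hTmeas measurableSet_Iic, hTdist,
      aux_gaussianReal_Iic_std _ _ hvne]
    congr 2
    ring
  have hdisj : Disjoint (T ⁻¹' (Set.Ici (n : ℝ))) (T ⁻¹' (Set.Iic (-(n : ℝ)))) := by
    rw [Set.disjoint_left]
    intro ω h1 h2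
    simp only [Set.mem_preimage, Set.mem_Ici, Set.mem_Iic] at h1 h2
    have hn' : (0:ℝ) < n := by exact_mod_cast hn
    linarith
  have hunion : P (T ⁻¹' (Set.Ici (n : ℝ))) + P (T ⁻¹' (Set.Iic (-(n : ℝ)))) ≤ P E := by
    rw [← measure_union hdisj (hTmeas measurableSet_Iic)]
    exact measure_mono (Set.union_subset hsubA hsubB)
  -- convert to reals
  have hsqrt : Real.sqrt (∑ i ∈ S, (σ i : ℝ) ^ 2 * (Matrix.trace (BJ i)) ^ 2)
      = Real.sqrt v := by rw [hvco]
  rw [hsqrt]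
  have hQA : Qccdf (((n : ℝ) - Acl.trace) / Real.sqrt v)
      = (P (T ⁻¹' (Set.Ici (n : ℝ)))).toReal := by rw [hPA]; rfl
  have hQB : Qccdf (((n : ℝ) + Acl.trace) / Real.sqrt v)
      = (P (T ⁻¹' (Set.Iic (-(n : ℝ))))).toReal := by rw [hPB]; rfl
  rw [hQA, hQB]
  rw [← ENNReal.toReal_add (measure_ne_top _ _) (measure_ne_top _ _)]
  apply ENNReal.toReal_mono (measure_ne_top _ _)
  rw [add_comm]
  exact hunion
end
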